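/- Let 0 < α ≤ 1 and define p₁ : ℝ → ℝ by p₁(x) = (1/π) ∫₀^∞ cos(ux) e^{−u^α} du. Then there exists a constant c < ∞ such that |x|^{α+1} |p₁(x)| ≤ c for all x ∈ ℝ. -/

import Mathlib

set_option maxHeartbeats 1000000

open MeasureTheory Real Set

namespace Smalltime52Aux

lemma shift_integral (F : ℝ → ℝ) (c : ℝ) :
    ∫ u in Ioi (0:ℝ), F (u + c) = ∫ v in Ioi c, F v := by
  have h := (measurePreserving_add_right volume c).setIntegral_preimage_emb
      (MeasurableEquiv.addRight c).measurableEmbedding F (Ioi c)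
  simpa using h

lemma shift_integrableOn {F : ℝ → ℝ} {c : ℝ} (hF : IntegrableOn F (Ioi c)) :
    IntegrableOn (fun u => F (u + c)) (Ioi (0:ℝ)) := by
  have h := ((measurePreserving_add_right volume c).integrableOn_comp_preimage
      (MeasurableEquiv.addRight c).measurableEmbedding (f := F) (s := Ioi c)).mpr hF
  simpa [Function.comp_def] using h

lemma f_int {α : ℝ} (h0 : 0 < α) :
    IntegrableOn (fun u : ℝ => Real.exp (-(u ^ α))) (Ioi (0:ℝ)) := by
  have hs : (0:ℝ) < 1/α := by positivity
  have h1 : IntegrableOn (fun y : ℝ => Real.exp (-y) * y ^ (1/α - 1)) (Ioi 0) :=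
    Real.GammaIntegral_convergent hs
  have h2 := (integrableOn_Ioi_comp_rpow_iff'
      (fun y : ℝ => Real.exp (-y) * y ^ (1/α - 1)) h0.ne').mpr h1
  apply h2.congr_fun ?_ measurableSet_Ioi
  intro u hu
  have hu0 : (0:ℝ) < u := hu
  have e1 : (u ^ α) ^ (1/α - 1) = u ^ (1 - α) := by
    rw [← Real.rpow_mul hu0.le]
    congr 1
    field_simp
  simp only [smul_eq_mul]
  rw [e1, mul_comm (Real.exp _) _, ← mul_assoc, ← Real.rpow_add hu0]
  have : α - 1 + (1 - α) = 0 := by ring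
  rw [this, Real.rpow_zero, one_mul]

lemma rpow_sub_le {α u h : ℝ} (h0 : 0 ≤ α) (h1 : α ≤ 1) (hu : 0 ≤ u) (hh : 0 ≤ h) :
    (u + h) ^ α ≤ u ^ α + h ^ α := by
  have key := NNReal.rpow_add_le_add_rpow u.toNNReal h.toNNReal h0 h1
  have h2 : (((u.toNNReal + h.toNNReal : NNReal) : ℝ)) ^ α
      ≤ ((u.toNNReal : ℝ)) ^ α + ((h.toNNReal : ℝ)) ^ α := by
    exact_mod_cast key
  simpa [Real.coe_toNNReal, hu, hh] using h2

lemma exp_sub_exp_le {a b : ℝ} (ha : 0 ≤ a) (hab : a ≤ b) :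
    Real.exp (-a) - Real.exp (-b) ≤ b - a := by
  have h1 : Real.exp (-a) ≤ 1 := Real.exp_le_one_iff.mpr (by linarith)
  have h2 : 1 - (b - a) ≤ Real.exp (-(b - a)) := by
    linarith [Real.add_one_le_exp (-(b - a))]
  have h3 : Real.exp (-a) - Real.exp (-b) = Real.exp (-a) * (1 - Real.exp (-(b - a))) := by
    rw [mul_sub, mul_one, ← Real.exp_add]
    congr 2
    ring
  rw [h3]
  nlinarith [Real.exp_nonneg (-a), Real.exp_nonneg (-(b - a))]

lemma conv_step {α u h : ℝ} (h0 : 0 < α) (h1 : α ≤ 1) (hu : 0 ≤ u) (hh : 0 ≤ h) :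
    2 * Real.exp (-((u + h) ^ α)) ≤ Real.exp (-(u ^ α)) + Real.exp (-((u + h + h) ^ α)) := by
  set a := u ^ α with hadef
  set b := (u + h + h) ^ α with hbdef
  have hc := (Real.concaveOn_rpow h0.le h1).2 (mem_Ici.mpr hu)
      (mem_Ici.mpr (by linarith : (0:ℝ) ≤ u + h + h))
      (by norm_num : (0:ℝ) ≤ 1/2) (by norm_num : (0:ℝ) ≤ 1/2) (by norm_num)
  simp only [smul_eq_mul] at hc
  have harg : (1:ℝ)/2 * u + 1/2 * (u + h + h) = u + h := by ring
  rw [harg] at hc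
  have e1 : Real.exp (-a/2) * Real.exp (-a/2) = Real.exp (-a) := by
    rw [← Real.exp_add]; congr 1; ring
  have e2 : Real.exp (-b/2) * Real.exp (-b/2) = Real.exp (-b) := by
    rw [← Real.exp_add]; congr 1; ring
  have e3 : Real.exp (-a/2) * Real.exp (-b/2) = Real.exp (-((a + b)/2)) := by
    rw [← Real.exp_add]; congr 1; ring
  have e4 : Real.exp (-((u + h) ^ α)) ≤ Real.exp (-((a + b)/2)) :=
    Real.exp_le_exp.mpr (by linarith)
  nlinarith [sq_nonneg (Real.exp (-a/2) - Real.exp (-b/2))]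

lemma key_id {F : ℝ → ℝ} {x h : ℝ} (hFc : Continuous F) (hFi : IntegrableOn F (Ioi (0:ℝ)))
    (hh : 0 < h) (hhx : h * x = π) :
    ∫ u in Ioi (0:ℝ), Real.cos (u * x) * (F u - F (u + h)) =
      2 * (∫ u in Ioi (0:ℝ), Real.cos (u * x) * F u)
        - ∫ u in Ioc (0:ℝ) h, Real.cos (u * x) * F u := by
  have hcos : Continuous fun u : ℝ => Real.cos (u * x) :=
    Real.continuous_cos.comp (continuous_id.mul continuous_const)
  have hbd : ∀ (G : ℝ → ℝ) (s : Set ℝ), IntegrableOn G s →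
      IntegrableOn (fun u => Real.cos (u * x) * G u) s := fun G s hG =>
    hG.bdd_mul (c := 1) hcos.aestronglyMeasurable (Filter.Eventually.of_forall fun u => by
      simpa using Real.abs_cos_le_one (u * x))
  have hFi' : IntegrableOn F (Ioi h) := hFi.mono_set (Ioi_subset_Ioi hh.le)
  have hFioc : IntegrableOn F (Ioc 0 h) := hFi.mono_set Ioc_subset_Ioi_self
  have int1 := hbd F _ hFi
  have int1' := hbd F _ hFi'
  have int1'' := hbd F _ hFioc
  have hfun : (fun u => Real.cos (u * x) * F (u + h))
      = fun u => (fun v => -(Real.cos (v * x) * F v)) (u + h) := by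
    funext u
    have h1 : (u + h) * x = u * x + π := by rw [add_mul, hhx]
    simp only [h1, Real.cos_add_pi]
    ring
  have int1n : IntegrableOn (fun v : ℝ => -(Real.cos (v * x) * F v)) (Ioi h) := int1'.neg
  have int2 : IntegrableOn (fun u => Real.cos (u * x) * F (u + h)) (Ioi (0:ℝ)) := by
    refine (shift_integrableOn int1n).congr_fun (fun u hu => ?_) measurableSet_Ioi
    have h1 : (u + h) * x = u * x + π := by rw [add_mul, hhx]
    simp only [h1, Real.cos_add_pi]
    ring
  have eqshift : ∫ u in Ioi (0:ℝ), Real.cos (u * x) * F (u + h)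
      = - ∫ v in Ioi h, Real.cos (v * x) * F v := by
    rw [show (∫ u in Ioi (0:ℝ), Real.cos (u * x) * F (u + h))
        = ∫ u in Ioi (0:ℝ), (fun v => -(Real.cos (v * x) * F v)) (u + h) from by rw [hfun],
      shift_integral (fun v => -(Real.cos (v * x) * F v)) h, integral_neg]
  have split : ∫ u in Ioi (0:ℝ), Real.cos (u * x) * F u
      = (∫ u in Ioc (0:ℝ) h, Real.cos (u * x) * F u)
        + ∫ u in Ioi h, Real.cos (u * x) * F u := by
    rw [← Ioc_union_Ioi_eq_Ioi hh.le]
    exact setIntegral_union Ioc_disjoint_Ioi_same measurableSet_Ioi int1'' int1'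
  have hsub : ∫ u in Ioi (0:ℝ), Real.cos (u * x) * (F u - F (u + h))
      = (∫ u in Ioi (0:ℝ), Real.cos (u * x) * F u)
        - ∫ u in Ioi (0:ℝ), Real.cos (u * x) * F (u + h) := by
    simp_rw [mul_sub]
    exact integral_sub int1 int2
  rw [hsub, eqshift]
  linarith [split]

end Smalltime52Aux

open Smalltime52Aux in
lemma smalltime_key_bound {α : ℝ} (h0 : 0 < α) (h1 : α ≤ 1) {x : ℝ} (hx : 0 < x) :
    |∫ u in Ioi (0:ℝ), Real.cos (u * x) * Real.exp (-(u ^ α))| ≤ (π / x) ^ (α + 1) := by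
  set h := π / x with hdef
  have hh : 0 < h := div_pos Real.pi_pos hx
  have hhx : h * x = π := div_mul_cancel₀ _ hx.ne'
  set f : ℝ → ℝ := fun u => Real.exp (-(u ^ α)) with hfdef
  have hfc : Continuous f := Real.continuous_exp.comp (Real.continuous_rpow_const h0.le).neg
  have hfi : IntegrableOn f (Ioi 0) := f_int h0
  have hgc : Continuous fun u : ℝ => f u - f (u + h) :=
    hfc.sub (hfc.comp (continuous_id.add continuous_const))
  have hgi : IntegrableOn (fun u : ℝ => f u - f (u + h)) (Ioi 0) :=
    hfi.sub (shift_integrableOn (hfi.mono_set (Ioi_subset_Ioi hh.le)))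
  -- pointwise facts
  have hf_le_one : ∀ u : ℝ, 0 ≤ u → f u ≤ 1 := fun u hu =>
    Real.exp_le_one_iff.mpr (by simpa using Real.rpow_nonneg hu α)
  have hone_sub : ∀ u : ℝ, 0 ≤ u → 1 - f u ≤ u ^ α := fun u hu => by
    have := Real.add_one_le_exp (-(u ^ α))
    simp only [hfdef]
    linarith
  have hg_nonneg : ∀ u : ℝ, 0 ≤ u → 0 ≤ f u - f (u + h) := fun u hu => by
    have hb : u ^ α ≤ (u + h) ^ α := Real.rpow_le_rpow hu (by linarith) h0.le
    have := Real.exp_le_exp.mpr (neg_le_neg hb)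
    simp only [hfdef]
    linarith
  have hg_le : ∀ u : ℝ, 0 ≤ u → f u - f (u + h) ≤ h ^ α := fun u hu => by
    have ha : 0 ≤ u ^ α := Real.rpow_nonneg hu α
    have hb : u ^ α ≤ (u + h) ^ α := Real.rpow_le_rpow hu (by linarith) h0.le
    have hsub : (u + h) ^ α ≤ u ^ α + h ^ α := rpow_sub_le h0.le h1 hu hh.le
    have := exp_sub_exp_le ha hb
    simp only [hfdef]
    linarith
  have hvol : (volume (Ioc (0:ℝ) h)).toReal = h := by
    simp [Real.volume_Ioc, ENNReal.toReal_ofReal hh.le]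
  -- bound A
  have hcosint : ∫ u in Ioc (0:ℝ) h, Real.cos (u * x) = 0 := by
    rw [← intervalIntegral.integral_of_le hh.le]
    rw [intervalIntegral.integral_comp_mul_right (fun y => Real.cos y) hx.ne']
    rw [integral_cos]
    simp [hhx]
  have hA : |∫ u in Ioc (0:ℝ) h, Real.cos (u * x) * f u| ≤ h ^ α * h := by
    have hcos : Continuous fun u : ℝ => Real.cos (u * x) :=
      Real.continuous_cos.comp (continuous_id.mul continuous_const)
    have i1 : IntegrableOn (fun u => Real.cos (u * x) * (f u - 1)) (Ioc (0:ℝ) h) :=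
      (hcos.mul (hfc.sub continuous_const)).integrableOn_Ioc
    have i2 : IntegrableOn (fun u : ℝ => Real.cos (u * x)) (Ioc (0:ℝ) h) :=
      hcos.integrableOn_Ioc
    have hsplit : ∫ u in Ioc (0:ℝ) h, Real.cos (u * x) * f u
        = ∫ u in Ioc (0:ℝ) h, Real.cos (u * x) * (f u - 1) := by
      have he : ∀ u : ℝ, Real.cos (u * x) * f u
          = Real.cos (u * x) * (f u - 1) + Real.cos (u * x) := fun u => by ring
      simp_rw [he]
      rw [integral_add i1 i2, hcosint, add_zero]
    rw [hsplit]
    calc |∫ u in Ioc (0:ℝ) h, Real.cos (u * x) * (f u - 1)|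
        ≤ h ^ α * (volume (Ioc (0:ℝ) h)).toReal := by
          rw [← Real.norm_eq_abs]
          apply norm_setIntegral_le_of_norm_le_const measure_Ioc_lt_top
          intro u hu
          have hu0 : 0 ≤ u := le_of_lt hu.1
          have h1' : |f u - 1| ≤ u ^ α := by
            rw [abs_sub_comm, abs_of_nonneg (by linarith [hf_le_one u hu0])]
            exact hone_sub u hu0
          have h2' : u ^ α ≤ h ^ α := Real.rpow_le_rpow hu0 hu.2 h0.le
          calc ‖Real.cos (u * x) * (f u - 1)‖ = |Real.cos (u * x)| * |f u - 1| :=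
                abs_mul _ _
            _ ≤ 1 * |f u - 1| :=
                mul_le_mul_of_nonneg_right (Real.abs_cos_le_one _) (abs_nonneg _)
            _ ≤ h ^ α := by rw [one_mul]; linarith
      _ = h ^ α * h := by rw [hvol]
  -- bound B
  have hB : |∫ u in Ioc (0:ℝ) h, Real.cos (u * x) * (f u - f (u + h))| ≤ h ^ α * h := by
    calc |∫ u in Ioc (0:ℝ) h, Real.cos (u * x) * (f u - f (u + h))|
        ≤ h ^ α * (volume (Ioc (0:ℝ) h)).toReal := by
          rw [← Real.norm_eq_abs]
          apply norm_setIntegral_le_of_norm_le_const measure_Ioc_lt_top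
          intro u hu
          have hu0 : 0 ≤ u := le_of_lt hu.1
          calc ‖Real.cos (u * x) * (f u - f (u + h))‖
              = |Real.cos (u * x)| * |f u - f (u + h)| := abs_mul _ _
            _ ≤ 1 * |f u - f (u + h)| :=
                mul_le_mul_of_nonneg_right (Real.abs_cos_le_one _) (abs_nonneg _)
            _ ≤ h ^ α := by
                rw [one_mul, abs_of_nonneg (hg_nonneg u hu0)]
                exact hg_le u hu0
      _ = h ^ α * h := by rw [hvol]
  -- bound K
  have hgshift_i : IntegrableOn (fun u : ℝ => f (u + h) - f (u + h + h)) (Ioi 0) := by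
    have := shift_integrableOn (F := fun u : ℝ => f u - f (u + h)) (c := h)
      (hgi.mono_set (Ioi_subset_Ioi hh.le))
    simpa using this
  have hdiff_i : IntegrableOn
      (fun u : ℝ => (f u - f (u + h)) - (f (u + h) - f (u + h + h))) (Ioi 0) :=
    hgi.sub hgshift_i
  have hK : |∫ u in Ioi (0:ℝ),
      Real.cos (u * x) * ((f u - f (u + h)) - (f (u + h) - f (u + h + h)))| ≤ h ^ α * h := by
    have hmono : ∀ u ∈ Ioi (0:ℝ), ‖Real.cos (u * x) *
        ((f u - f (u + h)) - (f (u + h) - f (u + h + h)))‖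
        ≤ (f u - f (u + h)) - (f (u + h) - f (u + h + h)) := by
      intro u hu
      have hu0 : (0:ℝ) ≤ u := le_of_lt hu
      have hnn : 0 ≤ (f u - f (u + h)) - (f (u + h) - f (u + h + h)) := by
        have := conv_step h0 h1 hu0 hh.le
        simp only [hfdef]
        linarith
      calc ‖Real.cos (u * x) * ((f u - f (u + h)) - (f (u + h) - f (u + h + h)))‖
          = |Real.cos (u * x)| * |(f u - f (u + h)) - (f (u + h) - f (u + h + h))| :=
            abs_mul _ _
        _ ≤ 1 * |(f u - f (u + h)) - (f (u + h) - f (u + h + h))| :=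
            mul_le_mul_of_nonneg_right (Real.abs_cos_le_one _) (abs_nonneg _)
        _ = (f u - f (u + h)) - (f (u + h) - f (u + h + h)) := by
            rw [one_mul, abs_of_nonneg hnn]
    have hKle : |∫ u in Ioi (0:ℝ),
        Real.cos (u * x) * ((f u - f (u + h)) - (f (u + h) - f (u + h + h)))|
        ≤ ∫ u in Ioi (0:ℝ), ((f u - f (u + h)) - (f (u + h) - f (u + h + h))) := by
      rw [← Real.norm_eq_abs]
      apply norm_integral_le_of_norm_le hdiff_i
      exact (ae_restrict_iff' measurableSet_Ioi).mpr (ae_of_all _ hmono)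
    have hshift_g : ∫ u in Ioi (0:ℝ), (f (u + h) - f (u + h + h))
        = ∫ u in Ioi h, (f u - f (u + h)) := by
      have := shift_integral (fun u : ℝ => f u - f (u + h)) h
      simpa using this
    have hsplit_g : ∫ u in Ioi (0:ℝ), (f u - f (u + h))
        = (∫ u in Ioc (0:ℝ) h, (f u - f (u + h))) + ∫ u in Ioi h, (f u - f (u + h)) := by
      rw [← Ioc_union_Ioi_eq_Ioi hh.le]
      exact setIntegral_union Ioc_disjoint_Ioi_same measurableSet_Ioi
        (hgi.mono_set Ioc_subset_Ioi_self) (hgi.mono_set (Ioi_subset_Ioi hh.le))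
    have heq : ∫ u in Ioi (0:ℝ), ((f u - f (u + h)) - (f (u + h) - f (u + h + h)))
        = ∫ u in Ioc (0:ℝ) h, (f u - f (u + h)) := by
      rw [integral_sub hgi hgshift_i, hshift_g, hsplit_g]
      ring
    have hIoc_g : ∫ u in Ioc (0:ℝ) h, (f u - f (u + h)) ≤ h ^ α * h := by
      calc ∫ u in Ioc (0:ℝ) h, (f u - f (u + h))
          ≤ |∫ u in Ioc (0:ℝ) h, (f u - f (u + h))| := le_abs_self _
        _ ≤ h ^ α * (volume (Ioc (0:ℝ) h)).toReal := by
            rw [← Real.norm_eq_abs]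
            apply norm_setIntegral_le_of_norm_le_const measure_Ioc_lt_top
            intro u hu
            have hu0 : 0 ≤ u := le_of_lt hu.1
            rw [Real.norm_eq_abs, abs_of_nonneg (hg_nonneg u hu0)]
            exact hg_le u hu0
        _ = h ^ α * h := by rw [hvol]
    calc |∫ u in Ioi (0:ℝ),
        Real.cos (u * x) * ((f u - f (u + h)) - (f (u + h) - f (u + h + h)))|
        ≤ ∫ u in Ioi (0:ℝ), ((f u - f (u + h)) - (f (u + h) - f (u + h + h))) := hKle
      _ = ∫ u in Ioc (0:ℝ) h, (f u - f (u + h)) := heq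
      _ ≤ h ^ α * h := hIoc_g
  -- identities
  have id1 : ∫ u in Ioi (0:ℝ), Real.cos (u * x) * (f u - f (u + h))
      = 2 * (∫ u in Ioi (0:ℝ), Real.cos (u * x) * f u)
        - ∫ u in Ioc (0:ℝ) h, Real.cos (u * x) * f u :=
    key_id hfc hfi hh hhx
  have id2 : ∫ u in Ioi (0:ℝ),
      Real.cos (u * x) * ((f u - f (u + h)) - (f (u + h) - f (u + h + h)))
      = 2 * (∫ u in Ioi (0:ℝ), Real.cos (u * x) * (f u - f (u + h)))
        - ∫ u in Ioc (0:ℝ) h, Real.cos (u * x) * (f u - f (u + h)) :=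
    key_id (F := fun u : ℝ => f u - f (u + h)) hgc hgi hh hhx
  set I := ∫ u in Ioi (0:ℝ), Real.cos (u * x) * f u with hI
  set A := ∫ u in Ioc (0:ℝ) h, Real.cos (u * x) * f u with hAdef
  set B := ∫ u in Ioc (0:ℝ) h, Real.cos (u * x) * (f u - f (u + h)) with hBdef
  set K := ∫ u in Ioi (0:ℝ),
      Real.cos (u * x) * ((f u - f (u + h)) - (f (u + h) - f (u + h + h))) with hKdef
  have h4I : 4 * I = K + 2 * A + B := by
    rw [id2, id1]
    ring
  have habs : |I| ≤ h ^ α * h := by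
    have : |4 * I| ≤ 4 * (h ^ α * h) := by
      rw [h4I]
      calc |K + 2 * A + B| ≤ |K + 2 * A| + |B| := abs_add_le _ _
        _ ≤ |K| + |2 * A| + |B| := by linarith [abs_add_le K (2 * A)]
        _ = |K| + 2 * |A| + |B| := by rw [abs_mul]; norm_num
        _ ≤ 4 * (h ^ α * h) := by linarith
    rw [abs_mul] at this
    have h44 : |(4:ℝ)| = 4 := by norm_num
    rw [h44] at this
    linarith
  calc |I| ≤ h ^ α * h := habs
    _ = h ^ (α + 1) := by rw [Real.rpow_add hh, Real.rpow_one]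

theorem smalltime_prop52_a (α : ℝ) (h0 : 0 < α) (h1 : α ≤ 1)
    (p₁ : ℝ → ℝ)
    (hp : ∀ x : ℝ, p₁ x = (1 / π) * ∫ u in Ioi (0:ℝ), Real.cos (u * x) * Real.exp (-(u ^ α))) :
    ∃ c : ℝ, ∀ x : ℝ, |x| ^ (α + 1) * |p₁ x| ≤ c := by
  refine ⟨π ^ α, fun x => ?_⟩
  rcases eq_or_ne x 0 with rfl | hx
  · rw [abs_zero, Real.zero_rpow (by positivity : α + 1 ≠ 0), zero_mul]
    positivity
  · have hy : 0 < |x| := abs_pos.mpr hx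
    have hint_eq : (∫ u in Ioi (0:ℝ), Real.cos (u * x) * Real.exp (-(u ^ α)))
        = ∫ u in Ioi (0:ℝ), Real.cos (u * |x|) * Real.exp (-(u ^ α)) := by
      rcases abs_choice x with habs | habs
      · rw [habs]
      · rw [habs]
        simp [mul_neg, Real.cos_neg]
    have hb := smalltime_key_bound h0 h1 hy
    rw [hp x, hint_eq, abs_mul, abs_of_pos (by positivity : (0:ℝ) < 1 / π)]
    have hxpow : 0 < |x| ^ (α + 1) := Real.rpow_pos_of_pos hy _
    have h2 : (π / |x|) ^ (α + 1) = π ^ (α + 1) / |x| ^ (α + 1) :=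
      Real.div_rpow Real.pi_pos.le (abs_nonneg x) (α + 1)
    calc |x| ^ (α + 1) * (1 / π * |∫ u in Ioi (0:ℝ),
        Real.cos (u * |x|) * Real.exp (-(u ^ α))|)
        ≤ |x| ^ (α + 1) * (1 / π * (π / |x|) ^ (α + 1)) := by gcongr
      _ = π ^ α := by
          rw [h2, Real.rpow_add Real.pi_pos, Real.rpow_one]
          field_simp
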